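/- Let X ⊆ 2^ω. Then X is non-meager in 2^ω if and only if for every function f : 2^{<ω} → 2^{<ω} there exists g ∈ X such that for infinitely many m, the string (g↾m)⌢f(g↾m) is an initial segment of g. -/

import Mathlib

/-- The length-`m` initial segment of `g ∈ 2^ω`, as a finite binary string. -/
def seg (g : ℕ → Bool) (m : ℕ) : List Bool :=
  List.ofFn fun i : Fin m => g i

/-- The finite binary string `L` is an initial segment of `g ∈ 2^ω`. -/
def PrefixOf (L : List Bool) (g : ℕ → Bool) : Prop :=
  ∀ i, i < L.length → g i = L.getD i false

open Set Topology TopologicalSpace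

lemma seg_length (g : ℕ → Bool) (n : ℕ) : (seg g n).length = n := List.length_ofFn

lemma seg_getD (g : ℕ → Bool) {i n : ℕ} (h : i < n) : (seg g n).getD i false = g i := by
  rw [List.getD_eq_getElem _ _ (by simpa [seg_length] using h)]
  simp [seg]

/-- The cylinder determined by a finite string. -/
def cyl (L : List Bool) : Set (ℕ → Bool) := {g | PrefixOf L g}

lemma mem_cyl_seg {h g : ℕ → Bool} {n : ℕ} : h ∈ cyl (seg g n) ↔ ∀ i < n, h i = g i := by
  constructor
  · intro hh i hi
    have := hh i (by simpa [seg_length] using hi)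
    rwa [seg_getD g hi] at this
  · intro hh i hi
    rw [seg_getD g (by simpa [seg_length] using hi)]
    exact hh i (by simpa [seg_length] using hi)

lemma self_mem_cyl_seg (g : ℕ → Bool) (n : ℕ) : g ∈ cyl (seg g n) :=
  mem_cyl_seg.mpr fun _ _ => rfl

lemma cyl_seg_anti {g : ℕ → Bool} {n m : ℕ} (h : n ≤ m) : cyl (seg g m) ⊆ cyl (seg g n) :=
  fun x hx => mem_cyl_seg.mpr fun i hi => mem_cyl_seg.mp hx i (lt_of_lt_of_le hi h)

lemma seg_eq_of_prefixOf {L : List Bool} {g : ℕ → Bool} (h : PrefixOf L g) :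
    seg g L.length = L := by
  apply List.ext_getElem (by simp [seg_length])
  intro i h1 h2
  have : g i = L.getD i false := h i h2
  rw [List.getD_eq_getElem _ _ h2] at this
  simpa [seg] using this

lemma prefixOf_append_left {s t : List Bool} {g : ℕ → Bool} (h : PrefixOf (s ++ t) g) :
    PrefixOf s g := by
  intro i hi
  have := h i (by simp; omega)
  rwa [List.getD_append _ _ _ _ hi] at this

lemma prefixOf_extend (L : List Bool) : PrefixOf L (fun i => L.getD i false) :=
  fun _ _ => rfl

lemma isOpen_cyl (L : List Bool) : IsOpen (cyl L) := by
  have : cyl L = ⋂ i ∈ Finset.range L.length,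
      (fun g : ℕ → Bool => g i) ⁻¹' {L.getD i false} := by
    ext g; simp [cyl, PrefixOf]
  rw [this]
  exact isOpen_biInter_finset fun i _ =>
    (continuous_apply i).isOpen_preimage _ (isOpen_discrete _)

lemma exists_seg_subset {U : Set (ℕ → Bool)} (hU : IsOpen U) {g : ℕ → Bool} (hg : g ∈ U) :
    ∃ n, cyl (seg g n) ⊆ U := by
  have hb := isTopologicalBasis_pi (fun _ : ℕ => isTopologicalBasis_opens (α := Bool))
  obtain ⟨S, hS, hgS, hSU⟩ := hb.exists_subset_of_mem_open hg hU
  obtain ⟨V, F, hV, rfl⟩ := hS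
  refine ⟨F.sup id + 1, fun h hh => hSU ?_⟩
  intro i hi
  have hlt : i < F.sup id + 1 := Nat.lt_succ_of_le (Finset.le_sup (f := id) hi)
  rw [mem_cyl_seg.mp hh i hlt]
  exact hgS i hi

lemma seg_take {g : ℕ → Bool} {n m : ℕ} (h : n ≤ m) : (seg g m).take n = seg g n := by
  apply List.ext_getElem (by simp [seg_length]; omega)
  intro i h1 h2
  simp [seg]

/-- Key extension lemma: given nowhere dense F and string s, extend s to avoid closure F. -/
lemma exists_avoid (F : Set (ℕ → Bool)) (hF : IsNowhereDense F) (s : List Bool) :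
    ∃ t : List Bool, ∀ g ∈ cyl (s ++ t), g ∉ closure F := by
  have hne : (fun i => s.getD i false) ∈ cyl s := prefixOf_extend s
  have hnsub : ¬ cyl s ⊆ closure F := by
    intro hsub
    have h2 : cyl s ⊆ interior (closure F) :=
      (isOpen_cyl s).subset_interior_iff.mpr hsub
    rw [hF] at h2
    exact h2 hne
  obtain ⟨g, hgs, hgF⟩ := not_subset.mp hnsub
  obtain ⟨n, hn⟩ := exists_seg_subset isClosed_closure.isOpen_compl hgF
  set m := max n s.length with hm
  have hsl : s.length ≤ m := le_max_right _ _
  have hseq : s ++ (seg g m).drop s.length = seg g m := by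
    have h1 : seg g s.length = s := seg_eq_of_prefixOf hgs
    calc s ++ (seg g m).drop s.length
        = (seg g m).take s.length ++ (seg g m).drop s.length := by
          rw [seg_take hsl, h1]
      _ = seg g m := List.take_append_drop _ _
  refine ⟨(seg g m).drop s.length, fun h hh => ?_⟩
  rw [hseq] at hh
  exact hn (cyl_seg_anti (le_max_left _ _) hh)

lemma isNowhereDense_union {s t : Set (ℕ → Bool)} (hs : IsNowhereDense s)
    (ht : IsNowhereDense t) : IsNowhereDense (s ∪ t) := by
  have h1 : IsClosed (closure s ∪ closure t) := isClosed_closure.union isClosed_closure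
  have h2 : Dense ((closure s)ᶜ ∩ (closure t)ᶜ) := by
    refine Dense.inter_of_isOpen_left ?_ ?_ isClosed_closure.isOpen_compl
    · exact ((isClosed_isNowhereDense_iff_compl (s := closure s)).mp
        ⟨isClosed_closure, hs.closure⟩).2
    · exact ((isClosed_isNowhereDense_iff_compl (s := closure t)).mp
        ⟨isClosed_closure, ht.closure⟩).2
  have h3 : IsNowhereDense (closure s ∪ closure t) := by
    rw [show (closure s ∪ closure t) = ((closure s)ᶜ ∩ (closure t)ᶜ)ᶜ by
      simp [Set.compl_inter]]
    exact ((isClosed_isNowhereDense_iff_compl).mpr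
      ⟨by simpa using h1.isOpen_compl, by simpa using h2⟩).2
  unfold IsNowhereDense at h3 ⊢
  rw [closure_union] at h3 ⊢
  rwa [closure_closure, closure_closure] at h3

/-- accumulated unions -/
def accU (φ : ℕ → Set (ℕ → Bool)) : ℕ → Set (ℕ → Bool)
  | 0 => φ 0
  | n+1 => accU φ n ∪ φ (n+1)

lemma accU_nowhereDense {φ : ℕ → Set (ℕ → Bool)} (h : ∀ n, IsNowhereDense (φ n)) :
    ∀ n, IsNowhereDense (accU φ n)
  | 0 => h 0
  | n+1 => isNowhereDense_union (accU_nowhereDense h n) (h (n+1))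

lemma subset_accU {φ : ℕ → Set (ℕ → Bool)} {k n : ℕ} (h : k ≤ n) : φ k ⊆ accU φ n := by
  induction n with
  | zero => simpa [accU] using (by omega : k = 0) ▸ subset_rfl
  | succ n ih =>
    rcases Nat.lt_or_ge k (n+1) with h' | h'
    · exact subset_trans (ih (by omega)) (subset_union_left)
    · have : k = n + 1 := by omega
      subst this; exact subset_union_right

lemma isNowhereDense.isMeagre' {s : Set (ℕ → Bool)} (hs : IsNowhereDense s) : IsMeagre s := by
  rw [isMeagre_iff_countable_union_isNowhereDense]
  exact ⟨{s}, by simpa using hs, countable_singleton s, by simp⟩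

/-- `X ⊆ 2^ω` is non-meager iff for every `f : 2^{<ω} → 2^{<ω}` there is `g ∈ X`
with `(g↾m)⌢f(g↾m)` an initial segment of `g` for infinitely many `m`. -/
theorem stmt9 (X : Set (ℕ → Bool)) :
    ¬ IsMeagre X ↔
      ∀ f : List Bool → List Bool, ∃ g ∈ X,
        {m : ℕ | PrefixOf (seg g m ++ f (seg g m)) g}.Infinite := by
  constructor
  · -- non-meager → RHS
    intro hX f
    by_contra hcon
    push_neg at hcon
    -- every g ∈ X has only finitely many m
    set A : ℕ → Set (ℕ → Bool) :=
      fun N => {g | ∀ m, N ≤ m → ¬ PrefixOf (seg g m ++ f (seg g m)) g} with hA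
    have hAnd : ∀ N, IsNowhereDense (A N) := by
      intro N
      rw [IsNowhereDense, eq_empty_iff_forall_notMem]
      intro g hg
      obtain ⟨n, hn⟩ := exists_seg_subset isOpen_interior hg
      set m := max n N with hm
      set t := seg g m with ht
      set L := t ++ f t with hL
      have hdisj : ∀ h' ∈ cyl L, h' ∉ A N := by
        intro h' hh' hA'
        have htp : PrefixOf t h' := prefixOf_append_left hh'
        have hseg : seg h' m = t := by
          have := seg_eq_of_prefixOf htp
          rwa [ht, seg_length] at this
        exact hA' m (le_max_right _ _) (by rw [hseg]; exact hh')
      have hext : (fun i => L.getD i false) ∈ cyl L := prefixOf_extend L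
      have hcl : (fun i => L.getD i false) ∈ closure (A N) := by
        apply interior_subset
        apply hn
        exact cyl_seg_anti (le_max_left _ _) (prefixOf_append_left hext)
      obtain ⟨h', hh1, hh2⟩ := mem_closure_iff.mp hcl (cyl L) (isOpen_cyl L) hext
      exact hdisj h' hh1 hh2
    have hXsub : X ⊆ ⋃ N, A N := by
      intro g hg
      have hfin : {m : ℕ | PrefixOf (seg g m ++ f (seg g m)) g}.Finite :=
        hcon g hg
      obtain ⟨N, hN⟩ := hfin.bddAbove
      refine mem_iUnion.mpr ⟨N + 1, fun m hm hp => ?_⟩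
      have := hN hp
      omega
    exact hX (IsMeagre.mono hXsub (isMeagre_iUnion fun N => isNowhereDense.isMeagre' (hAnd N)))
  · -- RHS → non-meager : contrapositive
    intro hR hM
    obtain ⟨S, hS1, hS2, hS3⟩ := isMeagre_iff_countable_union_isNowhereDense.mp hM
    rcases S.eq_empty_or_nonempty with rfl | hSne
    · obtain ⟨g, hg, _⟩ := hR id
      simpa using hS3 hg
    · obtain ⟨φ, hφ⟩ := hS2.exists_eq_range hSne
      have hφnd : ∀ n, IsNowhereDense (φ n) := fun n => hS1 _ (hφ ▸ mem_range_self n)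
      have hav : ∀ s : List Bool, ∃ t : List Bool,
          ∀ g ∈ cyl (s ++ t), g ∉ closure (accU φ s.length) :=
        fun s => exists_avoid _ (accU_nowhereDense hφnd s.length) s
      choose f hf using hav
      obtain ⟨g, hgX, hinf⟩ := hR f
      obtain ⟨u, huS, hgu⟩ := hS3 hgX
      rw [hφ] at huS
      obtain ⟨k, rfl⟩ := huS
      obtain ⟨m, hm, hkm⟩ := hinf.exists_gt k
      have hgc : g ∈ cyl (seg g m ++ f (seg g m)) := hm
      have := hf (seg g m) g hgc
      rw [seg_length] at this
      exact this (subset_closure (subset_accU (le_of_lt hkm) hgu))
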